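/- Every infinite subset of the m-adic tree m^{<ω} contains an infinite (i,j)-comb for some pair (i,j) ∈ m × m. -/

import Mathlib

open Filter Topology

/-- `s` is an initial segment of the branch `x ∈ m^ω`. -/
def PrefixF {m : ℕ} (s : List (Fin m)) (x : ℕ → Fin m) : Prop :=
  ∀ k, (h : k < s.length) → s.get ⟨k, h⟩ = x k

/-- `IncFB x s (i, j)` is the incidence `inc(x, s) = (i, j)` of a branch `x ∈ m^ω` with a
node `s ∈ m^{<ω}`: either `s⌢i ≤ x` (and then `j = i`), or the meet `r = x ∧ s` is a
proper initial segment of both, with `r⌢i ≤ x` and `r⌢j ≤ s`. -/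
def IncFB {m : ℕ} (x : ℕ → Fin m) (s : List (Fin m)) (p : Fin m × Fin m) : Prop :=
  (p.2 = p.1 ∧ PrefixF (s ++ [p.1]) x) ∨
  (p.1 ≠ p.2 ∧ ∃ r : List (Fin m), PrefixF (r ++ [p.1]) x ∧ (r ++ [p.2]) <+: s)

/-- `r` is the meet `s ∧ x`: the longest common initial segment of `s` and the branch
`x`. -/
def IsMeet {m : ℕ} (x : ℕ → Fin m) (s : List (Fin m)) (r : List (Fin m)) : Prop :=
  PrefixF r x ∧ r <+: s ∧ ¬ ((r ++ [x r.length]) <+: s)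

namespace CombAux

variable {m : ℕ}

/-- The divergence point of a node `a` from the branch `x`: the least `k` at which `a`
stops agreeing with `x` (which is `a.length` if `a` is an initial segment of `x`). -/
def dvg (x : ℕ → Fin m) (a : List (Fin m)) : ℕ :=
  Nat.find (p := fun k => ¬ ∃ h : k < a.length, a.get ⟨k, h⟩ = x k)
    ⟨a.length, fun ⟨h, _⟩ => absurd h (lt_irrefl _)⟩

lemma dvg_le (x : ℕ → Fin m) (a : List (Fin m)) : dvg x a ≤ a.length := by
  unfold dvg
  exact Nat.find_le (fun ⟨h, _⟩ => absurd h (lt_irrefl _))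

lemma dvg_agree (x : ℕ → Fin m) (a : List (Fin m)) {k : ℕ} (hk : k < dvg x a) :
    ∃ h : k < a.length, a.get ⟨k, h⟩ = x k := by
  unfold dvg at hk
  exact not_not.mp (Nat.find_min _ hk)

lemma dvg_spec (x : ℕ → Fin m) (a : List (Fin m)) :
    ¬ ∃ h : dvg x a < a.length, a.get ⟨dvg x a, h⟩ = x (dvg x a) := by
  unfold dvg
  exact Nat.find_spec
    (p := fun k => ¬ ∃ h : k < a.length, a.get ⟨k, h⟩ = x k)
    ⟨a.length, fun ⟨h, _⟩ => absurd h (lt_irrefl _)⟩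

lemma length_take_dvg (x : ℕ → Fin m) (a : List (Fin m)) :
    (a.take (dvg x a)).length = dvg x a := by
  simp [Nat.min_eq_left (dvg_le x a)]

lemma isMeet_take_dvg (x : ℕ → Fin m) (a : List (Fin m)) :
    IsMeet x a (a.take (dvg x a)) := by
  refine ⟨?_, List.take_prefix _ _, ?_⟩
  · intro k h
    rw [length_take_dvg] at h
    obtain ⟨h', hh⟩ := dvg_agree x a h
    rw [List.get_eq_getElem, List.getElem_take]
    exact hh
  · intro hpre
    have hr : (a.take (dvg x a)).length = dvg x a := length_take_dvg x a
    have hlen := hpre.length_le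
    rw [List.length_append, hr, List.length_singleton] at hlen
    have hlt : dvg x a < a.length := hlen
    apply dvg_spec x a
    refine ⟨hlt, ?_⟩
    have hidx : dvg x a < (a.take (dvg x a) ++ [x (a.take (dvg x a)).length]).length := by
      rw [List.length_append, hr, List.length_singleton]; omega
    have h1 := hpre.getElem (i := dvg x a) hidx
    rw [List.getElem_concat_length hr.symm] at h1
    rw [List.get_eq_getElem, ← h1, hr]

lemma dvg_ge (x : ℕ → Fin m) (a : List (Fin m)) {t : List (Fin m)}
    (hpre : t <+: a) (hx : PrefixF t x) : t.length ≤ dvg x a := by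
  by_contra h
  push_neg at h
  have hlt : dvg x a < a.length := lt_of_lt_of_le h hpre.length_le
  apply dvg_spec x a
  refine ⟨hlt, ?_⟩
  have := hx (dvg x a) h
  rw [List.get_eq_getElem] at this ⊢
  rw [← hpre.getElem h] at *
  exact this

/-- The incidence pair of a node `a` with a branch `x`. -/
noncomputable def pairF (x : ℕ → Fin m) (a : List (Fin m)) : Fin m × Fin m :=
  if h : dvg x a < a.length then (x (dvg x a), a.get ⟨dvg x a, h⟩)
  else (x (dvg x a), x (dvg x a))

lemma incFB_pairF (x : ℕ → Fin m) (a : List (Fin m)) : IncFB x a (pairF x a) := by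
  unfold pairF
  split_ifs with h
  · right
    constructor
    · intro heq
      apply dvg_spec x a
      exact ⟨h, heq.symm⟩
    · refine ⟨a.take (dvg x a), ?_, ?_⟩
      · intro k hk
        simp only [List.length_append, List.length_singleton, length_take_dvg] at hk
        rw [List.get_eq_getElem]
        rcases Nat.lt_or_ge k (dvg x a) with hk' | hk'
        · rw [List.getElem_append_left (by rw [length_take_dvg]; exact hk'),
            List.getElem_take]
          obtain ⟨h', hh⟩ := dvg_agree x a hk'
          exact hh
        · have hkd : k = dvg x a := by omega
          subst hkd
          rw [List.getElem_concat_length (length_take_dvg x a).symm]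
      · have hts : a.take (dvg x a) ++ [a.get ⟨dvg x a, h⟩] = a.take (dvg x a + 1) := by
          rw [List.take_succ, List.getElem?_eq_getElem h]
          rfl
        rw [hts]
        exact List.take_prefix _ _
  · left
    have hd : dvg x a = a.length := le_antisymm (dvg_le x a) (not_lt.mp h)
    refine ⟨rfl, ?_⟩
    intro k hk
    simp only [List.length_append, List.length_singleton] at hk
    rw [List.get_eq_getElem]
    rcases Nat.lt_or_ge k a.length with hk' | hk'
    · rw [List.getElem_append_left hk']
      obtain ⟨h', hh⟩ := dvg_agree x a (show k < dvg x a by rw [hd]; exact hk')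
      exact hh
    · have hkd : k = a.length := by omega
      subst hkd
      rw [List.getElem_concat_length rfl, hd]

/-- A chain through an infinite finitely-branching tree. -/
noncomputable def chainAux (T : List (Fin m) → Prop) (h0 : T [])
    (hstep : ∀ t, T t → ∃ i, T (t ++ [i])) : ℕ → {t : List (Fin m) // T t}
  | 0 => ⟨[], h0⟩
  | n + 1 =>
      ⟨(chainAux T h0 hstep n).1 ++
          [Classical.choose (hstep (chainAux T h0 hstep n).1 (chainAux T h0 hstep n).2)],
        Classical.choose_spec (hstep (chainAux T h0 hstep n).1 (chainAux T h0 hstep n).2)⟩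

/-- The branch determined by the chain. -/
noncomputable def branch (T : List (Fin m) → Prop) (h0 : T [])
    (hstep : ∀ t, T t → ∃ i, T (t ++ [i])) (n : ℕ) : Fin m :=
  Classical.choose (hstep (chainAux T h0 hstep n).1 (chainAux T h0 hstep n).2)

lemma chain_succ (T : List (Fin m) → Prop) (h0 : T [])
    (hstep : ∀ t, T t → ∃ i, T (t ++ [i])) (n : ℕ) :
    (chainAux T h0 hstep (n + 1)).1 = (chainAux T h0 hstep n).1 ++ [branch T h0 hstep n] :=
  rfl

lemma chain_length (T : List (Fin m) → Prop) (h0 : T [])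
    (hstep : ∀ t, T t → ∃ i, T (t ++ [i])) (n : ℕ) :
    (chainAux T h0 hstep n).1.length = n := by
  induction n with
  | zero => rfl
  | succ n ih => rw [chain_succ]; simp [ih]

lemma chain_prefixF (T : List (Fin m) → Prop) (h0 : T [])
    (hstep : ∀ t, T t → ∃ i, T (t ++ [i])) (n : ℕ) :
    PrefixF (chainAux T h0 hstep n).1 (branch T h0 hstep) := by
  induction n with
  | zero => intro k h; simp [chain_length] at h
  | succ n ih =>
      intro k h
      have h' : k < n + 1 := by rw [chain_length] at h; exact h
      rw [List.get_eq_getElem]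
      simp only [chain_succ]
      rcases Nat.lt_or_ge k n with hk | hk
      · rw [List.getElem_append_left (by rw [chain_length]; exact hk)]
        have := ih k (by rw [chain_length]; exact hk)
        rw [List.get_eq_getElem] at this
        exact this
      · have hkn : k = n := by omega
        subst hkn
        rw [List.getElem_concat_length (chain_length T h0 hstep k).symm]

/-- A subsequence of an infinite set of naturals growing past `φ` of the previous term. -/
noncomputable def subseqAux (N : Set ℕ) (hN : N.Infinite) (φ : ℕ → ℕ) : ℕ → {n // n ∈ N}
  | 0 => ⟨hN.nonempty.choose, hN.nonempty.choose_spec⟩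
  | k + 1 =>
      ⟨(hN.exists_gt (φ (subseqAux N hN φ k).1)).choose,
       (hN.exists_gt (φ (subseqAux N hN φ k).1)).choose_spec.1⟩

lemma subseqAux_growth (N : Set ℕ) (hN : N.Infinite) (φ : ℕ → ℕ) (k : ℕ) :
    φ (subseqAux N hN φ k).1 < (subseqAux N hN φ (k + 1)).1 :=
  (hN.exists_gt (φ (subseqAux N hN φ k).1)).choose_spec.2

end CombAux

/-- Every infinite subset `A` of the `m`-adic tree `m^{<ω}` contains an infinite
`(i,j)`-comb for some pair `(i,j) ∈ m × m`: an infinite sequence of distinct nodes of `A`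
whose meets with some branch `x` form a strictly increasing chain (so their lengths tend
to infinity) and whose incidence with `x` is always `(i,j)`. -/
theorem infinite_subset_contains_comb (m : ℕ) (A : Set (List (Fin m))) (hA : A.Infinite) :
    ∃ (i j : Fin m) (s : ℕ → List (Fin m)) (r : ℕ → List (Fin m)) (x : ℕ → Fin m),
      Function.Injective s ∧ (∀ n, s n ∈ A) ∧
      StrictMono (fun n => (r n).length) ∧
      (∀ n, IsMeet x (s n) (r n)) ∧
      (∀ n, IncFB x (s n) (i, j)) := by
  classical
  -- The tree of nodes below infinitely many elements of `A`
  have h0 : ({a ∈ A | [] <+: a} : Set (List (Fin m))).Infinite :=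
    hA.mono (fun a ha => ⟨ha, List.nil_prefix⟩)
  have hstep : ∀ t : List (Fin m), ({a ∈ A | t <+: a} : Set (List (Fin m))).Infinite →
      ∃ i, ({a ∈ A | t ++ [i] <+: a} : Set (List (Fin m))).Infinite := by
    intro t ht
    by_contra hc
    push_neg at hc
    have hfin : ∀ i, ({a ∈ A | t ++ [i] <+: a} : Set (List (Fin m))).Finite :=
      fun i => hc i
    have hsub : {a ∈ A | t <+: a} ⊆
        ({t} : Set (List (Fin m))) ∪ ⋃ i, {a ∈ A | t ++ [i] <+: a} := by
      rintro a ⟨haA, hpre⟩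
      by_cases he : a = t
      · exact Or.inl (by simp [he])
      · have hlt : t.length < a.length :=
          lt_of_le_of_ne hpre.length_le (fun h => he (hpre.eq_of_length h).symm)
        refine Or.inr (Set.mem_iUnion.mpr ⟨a.get ⟨t.length, hlt⟩, haA, ?_⟩)
        have ht' : t = a.take t.length := List.prefix_iff_eq_take.mp hpre
        have hts : t ++ [a.get ⟨t.length, hlt⟩] = a.take (t.length + 1) := by
          rw [List.take_succ, List.getElem?_eq_getElem hlt, ← ht']
          rfl
        rw [hts]
        exact List.take_prefix _ _
    exact ht (((Set.finite_singleton t).union (Set.finite_iUnion hfin)).subset hsub)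
  -- `m = 0` is impossible
  rcases Nat.eq_zero_or_pos m with hm | hm
  · subst hm
    exfalso
    apply hA
    apply (Set.finite_singleton ([] : List (Fin 0))).subset
    intro l _
    cases l with
    | nil => rfl
    | cons h t => exact h.elim0
  -- the branch
  set T : List (Fin m) → Prop := fun t => ({a ∈ A | t <+: a} : Set (List (Fin m))).Infinite
    with hT
  set c := CombAux.chainAux T h0 hstep with hc
  set x := CombAux.branch T h0 hstep with hxdef
  -- pick witnesses above each chain node
  have hpick : ∀ n : ℕ, ∃ a, a ∈ A ∧ (c n).1 <+: a := by
    intro n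
    obtain ⟨a, ha⟩ := ((c n).2 : T (c n).1).nonempty
    exact ⟨a, ha.1, ha.2⟩
  choose a haA hapre using hpick
  have hdvg_ge : ∀ n, n ≤ CombAux.dvg x (a n) := by
    intro n
    have := CombAux.dvg_ge x (a n) (hapre n) (CombAux.chain_prefixF T h0 hstep n)
    rwa [CombAux.chain_length] at this
  -- pigeonhole on the incidence pair
  obtain ⟨p, hp⟩ := Finite.exists_infinite_fiber (fun n => CombAux.pairF x (a n))
  have hN : ((fun n => CombAux.pairF x (a n)) ⁻¹' {p}).Infinite :=
    Set.infinite_coe_iff.mp hp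
  have key := fun k => CombAux.subseqAux_growth _ hN (fun n => CombAux.dvg x (a n)) k
  set e := CombAux.subseqAux _ hN (fun n => CombAux.dvg x (a n)) with he
  have hgrow : ∀ k, CombAux.dvg x (a (e k).1) < CombAux.dvg x (a (e (k + 1)).1) := by
    intro k
    exact lt_of_lt_of_le (key k) (hdvg_ge _)
  set F : List (Fin m) → ℕ := fun z => (z.take (CombAux.dvg x z)).length with hF
  have hmono : StrictMono (fun k => F (a (e k).1)) := by
    apply strictMono_nat_of_lt_succ
    intro k
    simp only [hF, CombAux.length_take_dvg]
    exact hgrow k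
  refine ⟨p.1, p.2, fun k => a (e k).1,
    fun k => (a (e k).1).take (CombAux.dvg x (a (e k).1)), x, ?_, fun k => haA _, hmono,
    fun k => CombAux.isMeet_take_dvg x _, ?_⟩
  · intro k l hkl
    have hkl' : a (e k).1 = a (e l).1 := hkl
    exact hmono.injective (congrArg F hkl')
  · intro k
    have hpk : CombAux.pairF x (a (e k).1) = p := (e k).2
    have h2 := CombAux.incFB_pairF x (a (e k).1)
    rw [hpk] at h2
    rwa [Prod.mk.eta]
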